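/- Let w : ℝ → ℝ^n be differentiable with w'(t) = χ(P^u(t) − I)w(t), where for each t the matrix P^u(t) is left stochastic. Then ∑_i w_i(t) is constant in time, and if w(0) has nonnegative entries then w(t) has nonnegative entries for all t ≥ 0. -/

import Mathlib

open Finset

theorem stmt_19 (n : ℕ) (χ : ℝ) (hχ : 0 ≤ χ)
    (Pu : ℝ → Matrix (Fin n) (Fin n) ℝ)
    (hcont : ∀ i j, Continuous fun t => Pu t i j)
    (hPu0 : ∀ t i j, 0 ≤ Pu t i j)
    (hPucol : ∀ t j, ∑ i, Pu t i j = 1)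
    (w : ℝ → Fin n → ℝ)
    (hderiv : ∀ t i, HasDerivAt (fun s => w s i)
      (χ * (((Pu t).mulVec (w t)) i - w t i)) t) :
    (∀ t, ∑ i, w t i = ∑ i, w 0 i) ∧
      ((∀ i, 0 ≤ w 0 i) → ∀ t ≥ 0, ∀ i, 0 ≤ w t i) := by
  have hwcont : ∀ i, Continuous fun s => w s i := by
    intro i
    have hd : Differentiable ℝ (fun s => w s i) := fun t => (hderiv t i).differentiableAt
    exact hd.continuous
  constructor
  · -- sum is constant
    have hzero : ∀ t, HasDerivAt (fun s => ∑ i, w s i) 0 t := by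
      intro t
      have h := HasDerivAt.fun_sum (fun i (_ : i ∈ Finset.univ) => hderiv t i)
      have key : ∑ i, χ * ((Pu t).mulVec (w t) i - w t i) = 0 := by
        simp only [Matrix.mulVec, dotProduct]
        rw [← Finset.mul_sum]
        have : ∑ i, (∑ j, Pu t i j * w t j - w t i) = 0 := by
          rw [Finset.sum_sub_distrib, Finset.sum_comm]
          simp_rw [← Finset.sum_mul, hPucol]
          simp
        rw [this, mul_zero]
      rwa [key] at h
    intro t
    have hdif : Differentiable ℝ (fun s => ∑ i, w s i) :=
      fun s => (hzero s).differentiableAt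
    exact is_const_of_deriv_eq_zero hdif (fun s => (hzero s).deriv) t 0
  · -- nonnegativity
    intro h0 t ht i
    set K : ℝ := χ * n + 1 with hK
    -- main claim with ε-perturbation
    have claim : ∀ ε > 0, ∀ s ≥ 0, ∀ j, 0 < w s j + ε * Real.exp (K * s) := by
      intro ε hε
      by_contra hcon
      push_neg at hcon
      obtain ⟨s₀, hs₀, j₀, hj₀⟩ := hcon
      set S : Set ℝ := {s | 0 ≤ s ∧ ∃ j, w s j + ε * Real.exp (K * s) ≤ 0} with hSdef
      have hSne : S.Nonempty := ⟨s₀, hs₀, j₀, hj₀⟩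
      have hSbdd : BddBelow S := ⟨0, fun x hx => hx.1⟩
      have hSclosed : IsClosed S := by
        have : S = {s : ℝ | 0 ≤ s} ∩ ⋃ j, {s | w s j + ε * Real.exp (K * s) ≤ 0} := by
          ext x; simp [hSdef, Set.mem_iUnion]
        rw [this]
        refine isClosed_le continuous_const continuous_id |>.inter ?_
        refine isClosed_iUnion_of_finite fun j => ?_
        exact isClosed_le (by continuity) continuous_const
      set T := sInf S with hTdef
      have hTS : T ∈ S := hSclosed.csInf_mem hSne hSbdd
      have hT0 : 0 ≤ T := hTS.1
      have hTpos : 0 < T := by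
        rcases hT0.lt_or_eq with h | h
        · exact h
        · exfalso
          obtain ⟨j, hj⟩ := hTS.2
          rw [← h] at hj
          simp only [mul_zero, Real.exp_zero, mul_one] at hj
          nlinarith [h0 j]
      have hpos : ∀ s, 0 ≤ s → s < T → ∀ j, 0 < w s j + ε * Real.exp (K * s) := by
        intro s hs hsT j
        by_contra hns
        push_neg at hns
        exact absurd (csInf_le hSbdd ⟨hs, j, hns⟩) (not_le.mpr hsT)
      set E := Real.exp (K * T) with hE
      have hEpos : 0 < E := Real.exp_pos _
      have hge : ∀ j, 0 ≤ w T j + ε * E := by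
        intro j
        have hcy : Continuous fun s => w s j + ε * Real.exp (K * s) :=
          (hwcont j).add (continuous_const.mul (Real.continuous_exp.comp
            (continuous_const.mul continuous_id)))
        have hne : (nhdsWithin T (Set.Iio T)).NeBot := nhdsLT_neBot T
        refine ge_of_tendsto ((hcy.tendsto T).mono_left
          (nhdsWithin_le_nhds : nhdsWithin T (Set.Iio T) ≤ nhds T)) ?_
        have hmem : Set.Ioo 0 T ∈ nhdsWithin T (Set.Iio T) := by
          rw [mem_nhdsWithin]
          exact ⟨Set.Ioi 0, isOpen_Ioi, hTpos, fun x hx => ⟨hx.1, hx.2⟩⟩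
        filter_upwards [hmem] with s hs
        exact (hpos s hs.1.le hs.2 j).le
      obtain ⟨i₁, hi₁⟩ := hTS.2
      have hi₁eq : w T i₁ + ε * E = 0 := le_antisymm hi₁ (hge i₁)
      -- derivative of the perturbed function at T
      set d : ℝ := χ * ((Pu T).mulVec (w T) i₁ - w T i₁) + ε * (E * K) with hd
      have hdy : HasDerivAt (fun s => w s i₁ + ε * Real.exp (K * s)) d T := by
        have h1 : HasDerivAt (fun s : ℝ => Real.exp (K * s)) (Real.exp (K * T) * K) T := by
          have := ((hasDerivAt_id T).const_mul K).exp
          simpa [mul_comm] using this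
        exact (hderiv T i₁).add (h1.const_mul ε)
      -- d is positive
      have hentry : ∀ j k, Pu T j k ≤ 1 := by
        intro j k
        calc Pu T j k ≤ ∑ l, Pu T l k :=
              Finset.single_le_sum (fun l _ => hPu0 T l k) (Finset.mem_univ j)
          _ = 1 := hPucol T k
      have hmv : -(ε * E) * n ≤ (Pu T).mulVec (w T) i₁ := by
        simp only [Matrix.mulVec, dotProduct]
        have h1 : ∀ j ∈ Finset.univ, -(ε * E) * Pu T i₁ j ≤ Pu T i₁ j * w T j := by
          intro j _
          rw [mul_comm (Pu T i₁ j) (w T j)]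
          apply mul_le_mul_of_nonneg_right _ (hPu0 T i₁ j)
          have := hge j
          linarith
        calc -(ε * E) * (n : ℝ) ≤ -(ε * E) * ∑ j, Pu T i₁ j := by
              apply mul_le_mul_of_nonpos_left _ (by nlinarith)
              calc (∑ j, Pu T i₁ j) ≤ ∑ _j : Fin n, (1 : ℝ) :=
                    Finset.sum_le_sum fun j _ => hentry i₁ j
                _ = n := by simp
          _ = ∑ j, -(ε * E) * Pu T i₁ j := by rw [Finset.mul_sum]
          _ ≤ ∑ j, Pu T i₁ j * w T j := Finset.sum_le_sum h1
      have hdpos : 0 < d := by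
        have hwTi : w T i₁ = -(ε * E) := by linarith
        have h2 : χ * (-(ε * E) * n + ε * E) ≤ χ * ((Pu T).mulVec (w T) i₁ - w T i₁) := by
          apply mul_le_mul_of_nonneg_left _ hχ
          rw [hwTi]; linarith [hmv]
        have h3 : ε * (E * K) = ε * E * (χ * n) + ε * E := by rw [hK]; ring
        have h4 : χ * (-(ε * E) * n + ε * E) + (ε * E * (χ * n) + ε * E)
            = χ * (ε * E) + ε * E := by ring
        have h5 : 0 < ε * E := mul_pos hε hEpos
        have h6 : 0 ≤ χ * (ε * E) := mul_nonneg hχ h5.le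
        rw [hd]
        linarith
      -- contradiction: positive derivative at a zero reached from above
      have hslope := hasDerivAt_iff_tendsto_slope.mp hdy
      have hmono : nhdsWithin T (Set.Iio T) ≤ nhdsWithin T {T}ᶜ :=
        nhdsWithin_mono T (fun x hx => ne_of_lt hx)
      have hslope' := hslope.mono_left hmono
      have hev : ∀ᶠ s in nhdsWithin T (Set.Iio T),
          0 < slope (fun s => w s i₁ + ε * Real.exp (K * s)) T s :=
        hslope'.eventually (lt_mem_nhds hdpos)
      have hmem : Set.Ioo 0 T ∈ nhdsWithin T (Set.Iio T) := by
        rw [mem_nhdsWithin]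
        exact ⟨Set.Ioi 0, isOpen_Ioi, hTpos, fun x hx => ⟨hx.1, hx.2⟩⟩
      have hne : (nhdsWithin T (Set.Iio T)).NeBot := nhdsLT_neBot T
      obtain ⟨s, hs1, hs2⟩ := (hev.and (Filter.eventually_of_mem hmem (fun x hx => hx))).exists
      rw [slope_def_field] at hs1
      have hsub : s - T < 0 := by linarith [hs2.2]
      have hlt : w s i₁ + ε * Real.exp (K * s) < 0 := by
        have hdiv : 0 < ((w s i₁ + ε * Real.exp (K * s)) -
            (w T i₁ + ε * Real.exp (K * T))) / (s - T) := by
          have : ((fun s => w s i₁ + ε * Real.exp (K * s)) s -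
              (fun s => w s i₁ + ε * Real.exp (K * s)) T) / (s - T) = _ := rfl
          simpa [div_eq_div_iff] using hs1
        rw [← hE, hi₁eq, sub_zero] at hdiv
        rcases div_pos_iff.mp hdiv with ⟨_, h⟩ | ⟨h, _⟩
        · exact absurd h (not_lt.mpr hsub.le)
        · exact h
      exact absurd (hpos s hs2.1.le hs2.2 i₁) (not_lt.mpr hlt.le)
    -- let ε → 0
    by_contra hneg
    push_neg at hneg
    set ε := -w t i / (2 * Real.exp (K * t)) with hεdef
    have hexp : 0 < Real.exp (K * t) := Real.exp_pos _
    have hεpos : 0 < ε := div_pos (by linarith) (by linarith)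
    have hc := claim ε hεpos t ht i
    rw [hεdef] at hc
    have heq : w t i + -w t i / (2 * Real.exp (K * t)) * Real.exp (K * t) = w t i / 2 := by
      field_simp
      ring
    rw [heq] at hc
    linarith
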